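/- arXiv:1105.4284 — 3 statements merged into one kernel-verified Lean document; each statement's English description precedes it below -/
import Mathlib

section
/- Every finite-dimensional anisotropic Lie algebra over a field of characteristic zero is reductive. -/
open Module

/-- A Lie algebra is *anisotropic* if for every `x` the adjoint endomorphism `ad x` is
semisimple, i.e. every `ad x`-invariant subspace admits an `ad x`-invariant complement. -/
def IsAnisotropic (K L : Type*) [Field K] [LieRing L] [LieAlgebra K L] : Prop :=
  ∀ x : L, ∀ p : Submodule K L, p.map (LieAlgebra.ad K L x) ≤ p →
    ∃ q : Submodule K L, q.map (LieAlgebra.ad K L x) ≤ q ∧ IsCompl p q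

/-- A Lie algebra is *reductive* if its solvable radical coincides with its center. -/
def IsReductive (K L : Type*) [Field K] [LieRing L] [LieAlgebra K L] : Prop :=
  LieAlgebra.radical K L = LieAlgebra.center K L

/-- A Lie algebra is *minimal nonabelian* if it is not abelian but every proper Lie
subalgebra of it is abelian. -/
def IsMinimalNonabelian (K L : Type*) [Field K] [LieRing L] [LieAlgebra K L] : Prop :=
  ¬ IsLieAbelian L ∧ ∀ S : LieSubalgebra K L, S ≠ ⊤ → IsLieAbelian S

/-- A Lie algebra is *regular* if every nonzero element is a regular element, i.e. the
coefficient of `T ^ (rank K L)` in the characteristic polynomial of `ad x` is nonzero. -/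
def IsRegularLieAlgebra (K L : Type*) [Field K] [LieRing L] [LieAlgebra K L]
    [Module.Finite K L] : Prop :=
  ∀ x : L, x ≠ 0 → LieAlgebra.IsRegular K x

/-- A Lie algebra has *depth 2* if it is neither abelian nor minimal nonabelian, and every
proper Lie subalgebra of it is abelian or minimal nonabelian. -/
def HasDepthTwo (K L : Type*) [Field K] [LieRing L] [LieAlgebra K L] : Prop :=
  ¬ IsLieAbelian L ∧ ¬ IsMinimalNonabelian K L ∧
    ∀ S : LieSubalgebra K L, S ≠ ⊤ → IsLieAbelian S ∨ IsMinimalNonabelian K S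

/-- If `L` is anisotropic and `ad x` is nilpotent (pointwise), then `x` is central. -/
lemma mem_center_of_ad_nilpotent {K L : Type*} [Field K] [LieRing L] [LieAlgebra K L]
    (h : IsAnisotropic K L) {x : L} {n : ℕ}
    (hn : (LieAlgebra.ad K L x) ^ n = 0) : x ∈ LieAlgebra.center K L := by
  set f := LieAlgebra.ad K L x with hf
  have hker : (LinearMap.ker f).map f ≤ LinearMap.ker f := by
    rintro y ⟨z, hz, rfl⟩
    simp_all [LinearMap.mem_ker.mp hz]
  obtain ⟨q, hq, hcompl⟩ := h x (LinearMap.ker f) hker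
  -- every element of q killed by a power of f is zero
  have key : ∀ k : ℕ, ∀ v ∈ q, (f ^ k) v = 0 → v = 0 := by
    intro k
    induction k with
    | zero => intro v _ hv; simpa using hv
    | succ k ih =>
      intro v hv hfv
      have hfvq : f v ∈ q := hq ⟨v, hv, rfl⟩
      have h1 : (f ^ k) (f v) = 0 := by
        rw [← Module.End.mul_apply, ← pow_succ]; exact hfv
      have h2 : f v = 0 := ih (f v) hfvq h1
      have hvk : v ∈ LinearMap.ker f := LinearMap.mem_ker.mpr h2
      have : v ∈ LinearMap.ker f ⊓ q := ⟨hvk, hv⟩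
      rwa [hcompl.inf_eq_bot, Submodule.mem_bot] at this
  have hqbot : q = ⊥ := by
    rw [eq_bot_iff]
    intro v hv
    have : (f ^ n) v = 0 := by rw [hn]; rfl
    exact Submodule.mem_bot _ |>.mpr (key n v hv this)
  have hker_top : LinearMap.ker f = ⊤ := by
    have := hcompl.sup_eq_top
    rwa [hqbot, sup_bot_eq] at this
  rw [LieModule.mem_maxTrivSubmodule]
  intro y
  have : f y = 0 := by
    have : y ∈ LinearMap.ker f := hker_top ▸ Submodule.mem_top
    exact LinearMap.mem_ker.mp this
  rw [hf, LieAlgebra.ad_apply] at this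
  rw [← lie_skew, this, neg_zero]

theorem anisotropic_isReductive (K L : Type*) [Field K] [CharZero K]
    [LieRing L] [LieAlgebra K L] [Module.Finite K L]
    (h : IsAnisotropic K L) : IsReductive K L := by
  set R := LieAlgebra.radical K L with hR
  -- Step: if the (k+1)-st derived ideal is central, so is the k-th.
  have step : ∀ k : ℕ,
      LieAlgebra.derivedSeriesOfIdeal K L (k + 1) R ≤ LieAlgebra.center K L →
      LieAlgebra.derivedSeriesOfIdeal K L k R ≤ LieAlgebra.center K L := by
    intro k hk x hx
    set D := LieAlgebra.derivedSeriesOfIdeal K L k R with hD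
    have had3 : (LieAlgebra.ad K L x) ^ 3 = 0 := by
      ext y
      have h1 : ⁅x, y⁆ ∈ D := by rw [← lie_skew]; exact neg_mem (D.lie_mem hx)
      have h2 : ⁅x, ⁅x, y⁆⁆ ∈ LieAlgebra.derivedSeriesOfIdeal K L (k + 1) R := by
        rw [LieAlgebra.derivedSeriesOfIdeal_succ]
        exact LieSubmodule.lie_mem_lie hx h1
      have h3 : ⁅x, ⁅x, ⁅x, y⁆⁆⁆ = 0 := by
        have hc := hk h2
        rw [LieModule.mem_maxTrivSubmodule] at hc
        exact hc x
      simp only [Module.End.pow_apply, Function.iterate_succ, Function.iterate_zero,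
        Function.comp_apply, id_eq, LieAlgebra.ad_apply, LinearMap.zero_apply]
      simpa using h3
    exact mem_center_of_ad_nilpotent h had3
  -- radical is solvable, so some derived ideal is ⊥, hence central; descend.
  have hsolv : LieAlgebra.IsSolvable R := inferInstance
  obtain ⟨n, hn⟩ := LieAlgebra.IsSolvable.solvable K R
  have hbot : LieAlgebra.derivedSeriesOfIdeal K L n R ≤ LieAlgebra.center K L := by
    rw [(LieIdeal.derivedSeries_eq_bot_iff R n).mp hn]
    exact bot_le
  have descend : ∀ m : ℕ,
      LieAlgebra.derivedSeriesOfIdeal K L m R ≤ LieAlgebra.center K L →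
      R ≤ LieAlgebra.center K L := by
    intro m
    induction m with
    | zero => intro hm; simpa using hm
    | succ m ih => intro hm; exact ih (step m hm)
  exact le_antisymm (descend n hbot) (LieAlgebra.center_le_radical K L)
end

section
/- Let L be a finite-dimensional regular Lie algebra over a field of characteristic zero. If L is not semisimple, then L is nilpotent. -/
open Module

theorem regular_not_semisimple_isNilpotent (K L : Type*) [Field K] [CharZero K]
    [LieRing L] [LieAlgebra K L] [Module.Finite K L]
    (hreg : IsRegularLieAlgebra K L)
    (hss : LieAlgebra.radical K L ≠ ⊥) :
    LieRing.IsNilpotent L := by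
  -- a nonzero abelian ideal
  set I : LieIdeal K L := LieAlgebra.derivedAbelianOfIdeal (LieAlgebra.radical K L) with hI
  have hIab : IsLieAbelian I := LieAlgebra.abelian_derivedAbelianOfIdeal _
  have hIne : I ≠ ⊥ := by
    intro h
    exact hss ((LieAlgebra.abelian_of_solvable_ideal_eq_bot_iff (LieAlgebra.radical K L)).mp h)
  obtain ⟨a, haI, ha0⟩ : ∃ a : L, a ∈ I ∧ a ≠ 0 := by
    have : Nontrivial I := (LieSubmodule.nontrivial_iff_ne_bot K L L).mpr hIne
    obtain ⟨⟨x, hx⟩, hxne⟩ := exists_ne (0 : I)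
    exact ⟨x, hx, by simpa [Subtype.ext_iff] using hxne⟩
  -- ad a is nilpotent since I is abelian
  have hsq : (LieAlgebra.ad K L a) ^ 2 = 0 := by
    ext y
    have hy : ⁅a, y⁆ ∈ I := lie_mem_left K L I a y haI
    have h0 : ⁅(⟨a, haI⟩ : I), (⟨⁅a, y⁆, hy⟩ : I)⁆ = (0 : I) := trivial_lie_zero _ _ _ _
    have h1 : ⁅a, ⁅a, y⁆⁆ = (0 : L) := congrArg Subtype.val h0
    simpa [pow_succ, LieAlgebra.ad_apply] using h1
  have hnil : IsNilpotent (LieAlgebra.ad K L a) := ⟨2, hsq⟩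
  -- hence the rank equals the dimension
  have hcharpoly : (LieAlgebra.ad K L a).charpoly = Polynomial.X ^ finrank K L :=
    hnil.charpoly_eq_X_pow_finrank
  have hrank : LieAlgebra.rank K L = finrank K L := by
    have := (LieAlgebra.isRegular_iff_natTrailingDegree_charpoly_eq_rank K (x := a)).mp (hreg a ha0)
    rw [hcharpoly, Polynomial.natTrailingDegree_X_pow] at this
    exact this.symm
  -- therefore every ad x is nilpotent
  rw [LieAlgebra.isNilpotent_iff_forall (R := K)]
  intro x
  rw [LinearMap.isNilpotent_iff_charpoly]
  refine (Polynomial.Monic.eq_X_pow_iff_natTrailingDegree_eq_natDegree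
    (LinearMap.charpoly_monic _)).mpr ?_ |>.trans ?_
  · refine le_antisymm (Polynomial.natTrailingDegree_le_natDegree _) ?_
    rw [(LinearMap.charpoly_natDegree _ : (LieAlgebra.ad K L x).charpoly.natDegree = finrank K L),
      ← hrank]
    exact LieAlgebra.rank_le_natTrailingDegree_charpoly_ad K (x := x)
  · rw [LinearMap.charpoly_natDegree]
end

section
/- Let L be a finite-dimensional Lie algebra of depth 2 over a field of characteristic zero which is neither solvable nor semisimple. Then the solvable radical of L is abelian. -/
open Module

section AuxLemmas

variable {K L : Type*} [Field K] [LieRing L] [LieAlgebra K L]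

/-- Brackets of elements of `I ⊔ K∙x` land in the ideal `I`. -/
lemma aux_lie_mem (I : LieIdeal K L) (x u v : L)
    (hu : u ∈ I.toSubmodule ⊔ (K ∙ x)) (hv : v ∈ I.toSubmodule ⊔ (K ∙ x)) :
    ⁅u, v⁆ ∈ I := by
  obtain ⟨r, hr, s, hs, rfl⟩ := Submodule.mem_sup.mp hu
  obtain ⟨r', hr', s', hs', rfl⟩ := Submodule.mem_sup.mp hv
  obtain ⟨a, rfl⟩ := Submodule.mem_span_singleton.mp hs
  obtain ⟨b, rfl⟩ := Submodule.mem_span_singleton.mp hs'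
  have hrI : r ∈ I := hr
  have hrI' : r' ∈ I := hr'
  have h4 : ⁅a • x, b • x⁆ = 0 := by
    rw [smul_lie, lie_smul, lie_self, smul_zero, smul_zero]
  rw [lie_add, add_lie, add_lie, h4, add_zero]
  refine add_mem (add_mem ?_ ?_) ?_
  · exact lie_mem_right K L I r r' hrI'
  · exact lie_mem_right K L I (a • x) r' hrI'
  · exact lie_mem_left K L I r (b • x) hrI

lemma aux_exists_nonabelian (S : LieSubalgebra K L) (h : ¬ IsLieAbelian S) :
    ∃ a b : L, a ∈ S ∧ b ∈ S ∧ ⁅a, b⁆ ≠ 0 := by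
  by_contra hc
  push_neg at hc
  exact h ⟨fun x y => Subtype.ext (hc x.1 y.1 x.2 y.2)⟩

lemma aux_abelian_bracket {S : LieSubalgebra K L} (h : IsLieAbelian S) {a b : L}
    (ha : a ∈ S) (hb : b ∈ S) : ⁅a, b⁆ = 0 :=
  congrArg Subtype.val (h.trivial (⟨a, ha⟩ : S) (⟨b, hb⟩ : S))

end AuxLemmas

theorem depthTwo_radical_abelian (K L : Type*) [Field K] [CharZero K]
    [LieRing L] [LieAlgebra K L] [Module.Finite K L]
    (hd2 : HasDepthTwo K L)
    (hnsolv : ¬ LieAlgebra.IsSolvable L)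
    (hnss : LieAlgebra.radical K L ≠ ⊥) :
    IsLieAbelian (LieAlgebra.radical K L) := by
  classical
  set R : LieIdeal K L := LieAlgebra.radical K L with hRdef
  have hRtop : R ≠ ⊤ := by
    intro h
    apply hnsolv
    have hsolv : LieAlgebra.IsSolvable (⊤ : LieIdeal K L) := by
      rw [← h]; infer_instance
    exact (LieAlgebra.solvable_iff_equiv_solvable LieIdeal.topEquiv).mp hsolv
  obtain ⟨x0, hx0⟩ : ∃ z : L, z ∉ R := by
    by_contra hc
    push_neg at hc
    exact hRtop (by ext z; simpa using hc z)
  have hRS : (R : LieSubalgebra K L) ≠ ⊤ := by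
    intro h
    apply hx0
    have : x0 ∈ (R : LieSubalgebra K L) := h.symm ▸ LieSubalgebra.mem_top x0
    exact this
  rcases hd2.2.2 (R : LieSubalgebra K L) hRS with hab | hmna
  · exact ⟨fun u v => Subtype.ext (aux_abelian_bracket hab u.2 v.2)⟩
  · obtain ⟨a, b, ha, hb, hab0⟩ := aux_exists_nonabelian (R : LieSubalgebra K L) hmna.1
    have haR : a ∈ R := ha
    have hbR : b ∈ R := hb
    exfalso
    obtain ⟨x, hxR, hxtop⟩ : ∃ x : L, x ∉ R ∧ R.toSubmodule ⊔ (K ∙ x) ≠ ⊤ := by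
      by_contra hc
      push_neg at hc
      have hsup := hc x0 hx0
      have hle : LieAlgebra.derivedSeries K L 1 ≤ R := by
        rw [LieAlgebra.derivedSeries_def, LieAlgebra.derivedSeriesOfIdeal_succ,
          LieAlgebra.derivedSeriesOfIdeal_zero]
        rw [LieSubmodule.lie_le_iff]
        intro p hp m hm
        refine aux_lie_mem R x0 p m ?_ ?_ <;> rw [hsup] <;> exact Submodule.mem_top
      obtain ⟨k, hk⟩ := LieAlgebra.IsSolvable.solvable K (LieAlgebra.radical K L)
      rw [LieIdeal.derivedSeries_eq_bot_iff] at hk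
      apply hnsolv
      refine LieAlgebra.IsSolvable.mk (R := K) (k := k + 1) (le_bot_iff.mp ?_)
      calc LieAlgebra.derivedSeries K L (k + 1)
          = LieAlgebra.derivedSeriesOfIdeal K L k (LieAlgebra.derivedSeries K L 1) :=
            LieAlgebra.derivedSeriesOfIdeal_add ⊤ k 1
        _ ≤ LieAlgebra.derivedSeriesOfIdeal K L k R :=
            LieAlgebra.derivedSeriesOfIdeal_mono hle k
        _ = ⊥ := hk
    let S : LieSubalgebra K L :=
      { toSubmodule := R.toSubmodule ⊔ (K ∙ x)
        lie_mem' := fun {u v} hu hv =>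
          (le_sup_left : R.toSubmodule ≤ R.toSubmodule ⊔ (K ∙ x))
            (show ⁅u, v⁆ ∈ R.toSubmodule from aux_lie_mem R x u v hu hv) }
    have hSmem : ∀ z : L, z ∈ S ↔ z ∈ R.toSubmodule ⊔ (K ∙ x) := fun z => Iff.rfl
    have hS : S ≠ ⊤ := by
      intro h
      apply hxtop
      refine Submodule.eq_top_iff'.mpr fun z => ?_
      exact (hSmem z).mp (h.symm ▸ LieSubalgebra.mem_top z)
    have haS : a ∈ S := (hSmem a).mpr (Submodule.mem_sup_left (show a ∈ R.toSubmodule from haR))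
    have hbS : b ∈ S := (hSmem b).mpr (Submodule.mem_sup_left (show b ∈ R.toSubmodule from hbR))
    have hxS : x ∈ S := (hSmem x).mpr (Submodule.mem_sup_right (Submodule.mem_span_singleton_self x))
    rcases hd2.2.2 S hS with hab | ⟨_, hmin⟩
    · exact hab0 (aux_abelian_bracket hab haS hbS)
    · let T : LieSubalgebra K S :=
        { toSubmodule := R.toSubmodule.comap (S.toSubmodule.subtype)
          lie_mem' := fun {u v} _ hv =>
            show ⁅(u : L), (v : L)⁆ ∈ R.toSubmodule from
              lie_mem_right K L R (u : L) (v : L) hv }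
      have hT : T ≠ ⊤ := by
        intro h
        apply hxR
        have hmem : (⟨x, hxS⟩ : S) ∈ T := h.symm ▸ LieSubalgebra.mem_top _
        exact hmem
      have habT := (hmin T hT).trivial (⟨⟨a, haS⟩, haR⟩ : T) (⟨⟨b, hbS⟩, hbR⟩ : T)
      exact hab0 (congrArg (fun z : T => ((z : S) : L)) habT)
end
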